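/- Let 𝒮 = Σ_{i=1}^L φ_i ⊗ ψ_i be an operator on V ⊗ V where all φ_i, ψ_j pairwise commute and are locally finite on V. Then 𝒮 is locally finite on V ⊗ V, and its Jordan–Chevalley decomposition is given by 𝒮^(s) = Σ_i φ_i^(s) ⊗ ψ_i^(s) and 𝒮^(n) = Σ_i (φ_i^(s) ⊗ ψ_i^(n) + φ_i^(n) ⊗ ψ_i^(s) + φ_i^(n) ⊗ ψ_i^(n)). -/

import Mathlib

/-- A linear operator on a complex vector space is *locally finite* if every vector lies in a
finite-dimensional invariant subspace. -/
def LocFinEnd {M : Type*} [AddCommGroup M] [Module ℂ M] (f : Module.End ℂ M) : Prop :=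
  ∀ v : M, ∃ W : Submodule ℂ M, FiniteDimensional ℂ W ∧ v ∈ W ∧ ∀ w ∈ W, f w ∈ W

/-- A linear operator is *locally nilpotent* if every vector is killed by some power. -/
def LocNilpEnd {M : Type*} [AddCommGroup M] [Module ℂ M] (f : Module.End ℂ M) : Prop :=
  ∀ v : M, ∃ k : ℕ, (f ^ k) v = 0

/-- A linear operator is *semisimple (diagonalizable)*: the space is spanned by eigenvectors. -/
def DiagEnd {M : Type*} [AddCommGroup M] [Module ℂ M] (f : Module.End ℂ M) : Prop :=
  Submodule.span ℂ {v : M | ∃ c : ℂ, f v = c • v} = ⊤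

/-- `IsJCDecomp f fs fn` : `f = fs + fn` is the Jordan–Chevalley decomposition of `f`,
with `fs` semisimple, `fn` locally nilpotent and `[fs, fn] = 0`. -/
def IsJCDecomp {M : Type*} [AddCommGroup M] [Module ℂ M] (f fs fn : Module.End ℂ M) : Prop :=
  f = fs + fn ∧ Commute fs fn ∧ DiagEnd fs ∧ LocNilpEnd fn


section Aux
variable {V : Type*} [AddCommGroup V] [Module ℂ V]

open Submodule Module

lemma spanInv {M : Type*} [AddCommGroup M] [Module ℂ M] {f : Module.End ℂ M} {s : Set M}
    (h : ∀ x ∈ s, f x ∈ Submodule.span ℂ s) :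
    ∀ w ∈ Submodule.span ℂ s, f w ∈ Submodule.span ℂ s := fun w hw =>
  (Submodule.span_le.mpr (fun x hx => h x hx) : Submodule.span ℂ s ≤ (Submodule.span ℂ s).comap f) hw

lemma locFin_of_diag {f : Module.End ℂ V} (hf : DiagEnd f) : LocFinEnd f := by
  intro v
  have hv : v ∈ Submodule.span ℂ {v : V | ∃ c : ℂ, f v = c • v} := by rw [hf]; trivial
  obtain ⟨t, hts, hvt⟩ := Submodule.mem_span_finite_of_mem_span hv
  refine ⟨Submodule.span ℂ (t : Set V), FiniteDimensional.span_of_finite ℂ t.finite_toSet, hvt, ?_⟩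
  refine spanInv fun x hx => ?_
  obtain ⟨c, hc⟩ := hts hx
  rw [hc]
  exact Submodule.smul_mem _ _ (Submodule.subset_span hx)

lemma locFin_of_locNilp {f : Module.End ℂ V} (hf : LocNilpEnd f) : LocFinEnd f := by
  classical
  intro v
  obtain ⟨k, hk⟩ := hf v
  refine ⟨Submodule.span ℂ ((Finset.range (k+1)).image (fun n => (f ^ n) v) : Finset V),
    FiniteDimensional.span_of_finite ℂ (Finset.finite_toSet _), ?_, ?_⟩
  · exact Submodule.subset_span (by simp; exact ⟨0, by simp⟩)
  · refine spanInv fun x hx => ?_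
    simp only [Finset.coe_image, Set.mem_image, Finset.mem_coe, Finset.mem_range] at hx
    obtain ⟨n, hn, rfl⟩ := hx
    rcases Nat.lt_or_ge (n+1) (k+1) with h | h
    · refine Submodule.subset_span ?_
      simp only [Finset.coe_image, Set.mem_image, Finset.mem_coe, Finset.mem_range]
      exact ⟨n+1, h, by rw [pow_succ']; rfl⟩
    · have : (f ^ (n+1)) v = 0 := by
        have : n + 1 = (n + 1 - k) + k := by omega
        rw [this, pow_add, Module.End.mul_apply, hk, map_zero]
      have h2 : f ((f ^ n) v) = 0 := by rw [← this, pow_succ']; rfl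
      rw [h2]; exact Submodule.zero_mem _

/-- extend a finite-dimensional subspace to one invariant under a locally finite operator,
preserving invariance under commuting operators. -/
lemma extendInv {f : Module.End ℂ V} (hf : LocFinEnd f) (W : Submodule ℂ V)
    (hW : FiniteDimensional ℂ W) :
    ∃ U : Submodule ℂ V, FiniteDimensional ℂ U ∧ W ≤ U ∧ (∀ x ∈ U, f x ∈ U) ∧
      ∀ g : Module.End ℂ V, Commute f g → (∀ x ∈ W, g x ∈ W) → ∀ x ∈ U, g x ∈ U := by
  classical
  set S : Set V := {x | ∃ (n : ℕ) (w : V), w ∈ W ∧ x = (f ^ n) w} with hS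
  refine ⟨Submodule.span ℂ S, ?_, ?_, ?_, ?_⟩
  · -- finite dimensional
    obtain ⟨s, hs⟩ := (Submodule.fg_iff_finiteDimensional W).mpr hW
    choose Ww hWw1 hWw2 hWw3 using fun w : V => hf w
    set T : Submodule ℂ V := s.sup Ww with hT
    haveI : FiniteDimensional ℂ T := Submodule.finiteDimensional_finset_sup s Ww
    have hWT : W ≤ T := by
      rw [← hs]
      refine Submodule.span_le.mpr fun w hw => ?_
      exact Finset.le_sup (f := Ww) hw (hWw2 w)
    have hTinv : ∀ x ∈ T, f x ∈ T := by
      intro x hx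
      have : T ≤ T.comap f := by
        refine Finset.sup_le fun w hw => fun y hy => ?_
        exact Finset.le_sup (f := Ww) hw (hWw3 w y hy)
      exact this hx
    have hle : Submodule.span ℂ S ≤ T := by
      refine Submodule.span_le.mpr ?_
      rintro x ⟨n, w, hw, rfl⟩
      exact Module.End.pow_apply_mem_of_forall_mem n hTinv w (hWT hw)
    exact Submodule.finiteDimensional_of_le hle
  · intro w hw
    exact Submodule.subset_span ⟨0, w, hw, by simp⟩
  · refine spanInv ?_
    rintro x ⟨n, w, hw, rfl⟩
    refine Submodule.subset_span ⟨n+1, w, hw, ?_⟩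
    rw [pow_succ']; rfl
  · intro g hfg hgW
    refine spanInv ?_
    rintro x ⟨n, w, hw, rfl⟩
    have : g ((f ^ n) w) = (f ^ n) (g w) := by
      have := (hfg.pow_left n).eq
      calc g ((f ^ n) w) = (g * f ^ n) w := rfl
        _ = (f ^ n * g) w := by rw [this]
        _ = (f ^ n) (g w) := rfl
    rw [this]
    exact Submodule.subset_span ⟨n, g w, hgW w hw, rfl⟩

/-- common finite-dimensional invariant subspace for a list of commuting locally finite ops. -/
lemma listInv : ∀ (l : List (Module.End ℂ V)), (∀ f ∈ l, LocFinEnd f) →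
    (∀ f ∈ l, ∀ g ∈ l, Commute f g) → ∀ (W : Submodule ℂ V), FiniteDimensional ℂ W →
    ∃ U : Submodule ℂ V, FiniteDimensional ℂ U ∧ W ≤ U ∧ ∀ f ∈ l, ∀ x ∈ U, f x ∈ U := by
  intro l
  induction l with
  | nil => intro _ _ W hW; exact ⟨W, hW, le_rfl, by simp⟩
  | cons f l ih =>
    intro hlf hcomm W hW
    obtain ⟨U, hU, hWU, hUinv⟩ := ih (fun g hg => hlf g (List.mem_cons_of_mem f hg))
      (fun a ha b hb => hcomm a (List.mem_cons_of_mem f ha) b (List.mem_cons_of_mem f hb)) W hW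
    obtain ⟨U', hU', hUU', hfU', hgU'⟩ := extendInv (hlf f (List.mem_cons_self)) U hU
    refine ⟨U', hU', le_trans hWU hUU', ?_⟩
    intro g hg
    rcases List.mem_cons.mp hg with rfl | hg'
    · exact hfU'
    · exact hgU' g (hcomm f (List.mem_cons_self) g hg) (hUinv g hg')

end Aux


section Aux2
variable {V : Type*} [AddCommGroup V] [Module ℂ V]
open Submodule Module Module.End Polynomial

/-- transfer of `(f - μ)^k` through restriction -/
lemma restrict_sub_pow_apply {f : Module.End ℂ V} {W : Submodule ℂ V}
    (h : ∀ x ∈ W, f x ∈ W) (μ : ℂ) (k : ℕ) (x : V) (hx : x ∈ W) :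
    ((((f.restrict h) - μ • (1 : Module.End ℂ W)) ^ k) ⟨x, hx⟩ : V)
      = ((f - μ • (1 : Module.End ℂ V)) ^ k) x := by
  have h' : ∀ x ∈ W, (f - μ • (1 : Module.End ℂ V)) x ∈ W := by
    intro y hy
    have : (f - μ • (1 : Module.End ℂ V)) y = f y - μ • y := by
      simp [LinearMap.sub_apply]
    rw [this]
    exact W.sub_mem (h y hy) (W.smul_mem μ hy)
  have e : f.restrict h - μ • (1 : Module.End ℂ W) = (f - μ • (1 : Module.End ℂ V)).restrict h' := by
    ext y
    simp [LinearMap.restrict_apply, LinearMap.sub_apply]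
  rw [e, Module.End.pow_restrict, LinearMap.restrict_coe_apply]

lemma maxGen_restrict_mem {f : Module.End ℂ V} {W : Submodule ℂ V}
    {h : ∀ x ∈ W, f x ∈ W} {μ : ℂ} {m : W}
    (hm : m ∈ Module.End.maxGenEigenspace (f.restrict h) μ) :
    (m : V) ∈ f.maxGenEigenspace μ := by
  rw [Module.End.mem_maxGenEigenspace] at hm ⊢
  obtain ⟨k, hk⟩ := hm
  refine ⟨k, ?_⟩
  rw [← restrict_sub_pow_apply h μ k (m : V) m.2, Subtype.coe_eta, hk]
  rfl

/-- locally finite operators have spanning generalized eigenspaces -/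
lemma iSup_maxGen_eq_top_of_locFin {f : Module.End ℂ V} (hf : LocFinEnd f) :
    ⨆ μ : ℂ, f.maxGenEigenspace μ = ⊤ := by
  rw [eq_top_iff']
  intro v
  obtain ⟨W, hWfd, hvW, hWinv⟩ := hf v
  haveI := hWfd
  have htop := Module.End.iSup_maxGenEigenspace_eq_top (f.restrict hWinv)
  have hmem : (⟨v, hvW⟩ : W) ∈ (⊤ : Submodule ℂ W) := trivial
  rw [← htop] at hmem
  have hv' : v ∈ Submodule.map W.subtype
      (⨆ μ : ℂ, Module.End.maxGenEigenspace (f.restrict hWinv) μ) :=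
    ⟨⟨v, hvW⟩, hmem, rfl⟩
  rw [Submodule.map_iSup] at hv'
  have hmono : (⨆ μ : ℂ, Submodule.map W.subtype
      (Module.End.maxGenEigenspace (f.restrict hWinv) μ)) ≤ ⨆ μ : ℂ, f.maxGenEigenspace μ := by
    refine iSup_mono fun μ => ?_
    rintro x ⟨u, hu, rfl⟩
    exact maxGen_restrict_mem hu
  exact hmono hv'

lemma aeval_X_sub_C_apply (d : Module.End ℂ V) (ν : ℂ) (x : V) :
    (Polynomial.aeval d (X - C ν)) x = d x - ν • x := by
  simp [Module.algebraMap_end_apply]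

/-- scalar action of products of (d - ν) on eigenvectors -/
lemma prod_sub_smul_eigen {d : Module.End ℂ V} {μ : ℂ} {a : V} (ha : d a = μ • a)
    (s : Finset ℂ) :
    (Polynomial.aeval d (∏ ν ∈ s, (X - C ν))) a = (∏ ν ∈ s, (μ - ν)) • a := by
  classical
  induction s using Finset.induction_on with
  | empty => simp
  | insert _ _ hν ih =>
    rename_i ν₀ s
    rw [Finset.prod_insert hν, Finset.prod_insert hν, map_mul, Module.End.mul_apply, ih, map_smul,
      aeval_X_sub_C_apply, ha, ← sub_smul, smul_smul, mul_comm]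

lemma sup_eigen_inv (d : Module.End ℂ V) (ν : ℂ) (s : Finset ℂ) :
    ∀ x ∈ s.sup (fun μ => d.eigenspace μ),
      (Polynomial.aeval d (X - C ν)) x ∈ s.sup (fun μ => d.eigenspace μ) := by
  intro x hx
  have hle : s.sup (fun μ => d.eigenspace μ) ≤
      (s.sup (fun μ => d.eigenspace μ)).comap (Polynomial.aeval d (X - C ν)) := by
    refine Finset.sup_le fun μ hμ => fun e he => ?_
    have he' := Module.End.mem_eigenspace_iff.mp he
    have : (Polynomial.aeval d (X - C ν)) e = (μ - ν) • e := by
      rw [aeval_X_sub_C_apply, he', sub_smul]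
    simp only [Submodule.mem_comap, this]
    exact Finset.le_sup (f := fun μ => d.eigenspace μ) hμ (Submodule.smul_mem _ _ he)
  exact hle hx

lemma prod_sub_smul_kill (d : Module.End ℂ V) :
    ∀ (s : Finset ℂ), ∀ x ∈ s.sup (fun μ => d.eigenspace μ),
      (Polynomial.aeval d (∏ ν ∈ s, (X - C ν))) x = 0 := by
  classical
  intro s
  induction s using Finset.induction_on with
  | empty => intro x hx; simp only [Finset.sup_empty, Submodule.mem_bot] at hx; simp [hx]
  | insert _ _ hν ih =>
    rename_i ν₀ s
    intro x hx
    rw [Finset.sup_insert] at hx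
    obtain ⟨a, ha, b, hb, rfl⟩ := Submodule.mem_sup.mp hx
    rw [Finset.prod_insert hν, mul_comm, map_mul, Module.End.mul_apply]
    have ha0 : (Polynomial.aeval d (X - C ν₀)) a = 0 := by
      rw [aeval_X_sub_C_apply, Module.End.mem_eigenspace_iff.mp ha, sub_self]
    rw [map_add, ha0, zero_add]
    exact ih _ (sup_eigen_inv d ν₀ s b hb)

lemma prod_sub_smul_mem {d : Module.End ℂ V} {W : Submodule ℂ V}
    (hW : ∀ x ∈ W, d x ∈ W) (s : Finset ℂ) {x : V} (hx : x ∈ W) :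
    (Polynomial.aeval d (∏ ν ∈ s, (X - C ν))) x ∈ W := by
  classical
  induction s using Finset.induction_on generalizing x with
  | empty => simpa
  | insert _ _ hν ih =>
    rename_i ν₀ s
    rw [Finset.prod_insert hν, map_mul, Module.End.mul_apply]
    have hx' := ih hx
    rw [aeval_X_sub_C_apply]
    exact W.sub_mem (hW _ hx') (W.smul_mem _ hx')

/-- eigencomponents of a vector in an invariant subspace stay in the subspace -/
lemma eig_comp_mem (d : Module.End ℂ V) {W : Submodule ℂ V} (hW : ∀ x ∈ W, d x ∈ W) :
    ∀ (s : Finset ℂ), ∀ x ∈ s.sup (fun μ => d.eigenspace μ), x ∈ W →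
      x ∈ Submodule.span ℂ {y : V | (∃ c : ℂ, d y = c • y) ∧ y ∈ W} := by
  classical
  intro s
  induction s using Finset.induction_on with
  | empty => intro x hx _; simp only [Finset.sup_empty, Submodule.mem_bot] at hx
             simp [hx]
  | insert _ _ hν ih =>
    rename_i μ s
    intro x hx hxW
    rw [Finset.sup_insert] at hx
    obtain ⟨a, ha, b, hb, rfl⟩ := Submodule.mem_sup.mp hx
    have hda : d a = μ • a := Module.End.mem_eigenspace_iff.mp ha
    have hqx : (Polynomial.aeval d (∏ ν ∈ s, (X - C ν))) (a + b) = (∏ ν ∈ s, (μ - ν)) • a := by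
      rw [map_add, prod_sub_smul_eigen hda, prod_sub_smul_kill d s b hb, add_zero]
    have hc : (∏ ν ∈ s, (μ - ν)) ≠ 0 := by
      refine Finset.prod_ne_zero_iff.mpr fun ν hνs => sub_ne_zero.mpr ?_
      rintro rfl; exact hν hνs
    have haW : a ∈ W := by
      have hmem := prod_sub_smul_mem hW s hxW
      rw [hqx] at hmem
      have := W.smul_mem (∏ ν ∈ s, (μ - ν))⁻¹ hmem
      rwa [smul_smul, inv_mul_cancel₀ hc, one_smul] at this
    have hbW : b ∈ W := by
      have hb' : b = (a + b) - a := by abel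
      rw [hb']; exact W.sub_mem hxW haW
    exact Submodule.add_mem _ (Submodule.subset_span ⟨⟨μ, hda⟩, haW⟩) (ih b hb hbW)

end Aux2

section Aux3
variable {V : Type*} [AddCommGroup V] [Module ℂ V]
open Submodule Module Module.End Polynomial

/-- restriction of a diagonalizable operator to an invariant subspace is diagonalizable -/
lemma diag_restrict {d : Module.End ℂ V} (hd : DiagEnd d) {W : Submodule ℂ V}
    (h : ∀ x ∈ W, d x ∈ W) : DiagEnd (d.restrict h) := by
  rw [DiagEnd, eq_top_iff]
  rintro w -
  -- ↑w lies in the span of eigenvectors of d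
  have h1 : (w : V) ∈ ⨆ μ : ℂ, d.eigenspace μ := by
    have : (w : V) ∈ Submodule.span ℂ {v : V | ∃ c : ℂ, d v = c • v} := by rw [hd]; trivial
    refine (Submodule.span_le.mpr ?_ : _ ≤ ⨆ μ : ℂ, d.eigenspace μ) this
    rintro y ⟨c, hc⟩
    exact le_iSup (fun μ : ℂ => d.eigenspace μ) c (Module.End.mem_eigenspace_iff.mpr hc)
  obtain ⟨s, hs⟩ := Submodule.mem_iSup_iff_exists_finset.mp h1
  rw [← Finset.sup_eq_iSup] at hs
  have h2 := eig_comp_mem d h s (w : V) hs w.2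
  -- transfer to the subtype
  have hset : {y : V | (∃ c : ℂ, d y = c • y) ∧ y ∈ W}
      = W.subtype '' {u : W | ∃ c : ℂ, (d.restrict h) u = c • u} := by
    ext y
    constructor
    · rintro ⟨⟨c, hc⟩, hyW⟩
      refine ⟨⟨y, hyW⟩, ⟨c, ?_⟩, rfl⟩
      exact Subtype.ext (by simpa [LinearMap.restrict_apply] using hc)
    · rintro ⟨u, ⟨c, hc⟩, rfl⟩
      refine ⟨⟨c, ?_⟩, u.2⟩
      have := congrArg (Subtype.val) hc
      simpa [LinearMap.restrict_apply] using this
  rw [hset, Submodule.span_image] at h2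
  obtain ⟨u, hu, huw⟩ := h2
  rwa [← (Subtype.ext huw : u = w)]

/-- a diagonalizable endomorphism of a finite-dimensional space is semisimple -/
lemma diag_isSemisimple_of_findim {M : Type*} [AddCommGroup M] [Module ℂ M]
    [FiniteDimensional ℂ M] {g : Module.End ℂ M} (hg : DiagEnd g) : g.IsSemisimple := by
  classical
  -- a finite spanning set of eigenvectors
  obtain ⟨s, hs⟩ : (⊤ : Submodule ℂ M).FG := Module.finite_def.mp inferInstance
  have hx : ∀ x : M, x ∈ Submodule.span ℂ {v : M | ∃ c : ℂ, g v = c • v} := by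
    intro x; rw [hg]; trivial
  have : ∀ x : {x // x ∈ s}, ∃ t : Finset M,
      ↑t ⊆ {v : M | ∃ c : ℂ, g v = c • v} ∧ (x : M) ∈ Submodule.span ℂ (t : Set M) := by
    intro x; exact Submodule.mem_span_finite_of_mem_span (hx x)
  choose t ht1 ht2 using this
  set T : Finset M := s.attach.biUnion t with hT
  have hTspan : Submodule.span ℂ (T : Set M) = ⊤ := by
    rw [eq_top_iff, ← hs]
    refine Submodule.span_le.mpr fun x hxs => ?_
    refine Submodule.span_mono ?_ (ht2 ⟨x, hxs⟩)
    intro y hy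
    exact Finset.mem_coe.mpr (Finset.mem_biUnion.mpr ⟨⟨x, hxs⟩, Finset.mem_attach _ _, hy⟩)
  have hTeig : ∀ e ∈ T, ∃ c : ℂ, g e = c • e := by
    intro e he
    obtain ⟨x, -, hx⟩ := Finset.mem_biUnion.mp he
    exact ht1 x hx
  choose cv hcv using fun e : {e // e ∈ T} => hTeig e e.2
  set vals : Finset ℂ := T.attach.image cv with hvals
  set P : ℂ[X] := ∏ μ ∈ vals, (X - C μ) with hP
  have hPsep : P.Separable := by
    rw [hP]
    exact (Polynomial.separable_prod_X_sub_C_iff' (f := fun μ : ℂ => μ) (s := vals)).mpr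
      (fun a _ b _ h => h)
  have hP0 : Polynomial.aeval g P = 0 := by
    have : ∀ y : M, (Polynomial.aeval g P) y = 0 := by
      intro y
      have hy : y ∈ Submodule.span ℂ (T : Set M) := by rw [hTspan]; trivial
      have hker : Submodule.span ℂ (T : Set M) ≤ LinearMap.ker (Polynomial.aeval g P) := by
        refine Submodule.span_le.mpr fun e he => ?_
        have hce : g e = cv ⟨e, he⟩ • e := hcv ⟨e, he⟩
        have hmem : cv ⟨e, he⟩ ∈ vals := Finset.mem_image_of_mem cv (Finset.mem_attach _ _)
        rw [SetLike.mem_coe, LinearMap.mem_ker, hP, ← Finset.prod_erase_mul vals _ hmem, map_mul,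
          Module.End.mul_apply, aeval_X_sub_C_apply, hce, sub_self, map_zero]
      exact hker hy
    exact LinearMap.ext this
  exact Module.End.isSemisimple_of_squarefree_aeval_eq_zero hPsep.squarefree hP0

/-- diagonalizable operators are finitely semisimple -/
lemma diag_isFinitelySemisimple {d : Module.End ℂ V} (hd : DiagEnd d) :
    d.IsFinitelySemisimple := by
  refine Module.End.isFinitelySemisimple_iff'.mpr fun p hp hfin => ?_
  haveI : FiniteDimensional ℂ p := hfin
  exact diag_isSemisimple_of_findim (diag_restrict hd hp)

/-- uniform nilpotency on finite-dimensional subspaces -/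
lemma exists_pow_kill {b : Module.End ℂ V} (hb : LocNilpEnd b) {U : Submodule ℂ V}
    (hU : FiniteDimensional ℂ U) : ∃ K : ℕ, ∀ y ∈ U, (b ^ K) y = 0 := by
  classical
  obtain ⟨t, ht⟩ := (Submodule.fg_iff_finiteDimensional U).mpr hU
  choose kf hkf using fun y : {y // y ∈ t} => hb y
  refine ⟨t.attach.sup kf, fun y hy => ?_⟩
  have hker : U ≤ LinearMap.ker (b ^ t.attach.sup kf) := by
    rw [← ht]
    refine Submodule.span_le.mpr fun e he => ?_
    have hle : kf ⟨e, he⟩ ≤ t.attach.sup kf := Finset.le_sup (Finset.mem_attach _ _)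
    rw [SetLike.mem_coe, LinearMap.mem_ker,
      show t.attach.sup kf = (t.attach.sup kf - kf ⟨e, he⟩) + kf ⟨e, he⟩ by omega,
      pow_add, Module.End.mul_apply, hkf ⟨e, he⟩, map_zero]
  exact LinearMap.mem_ker.mp (hker hy)

/-- Key lemma: the semisimple part of a JC decomposition acts as `μ` on every generalized
`μ`-eigenvector of `f`. -/
lemma jc_semisimple_part_apply {f fs fn : Module.End ℂ V} (hJC : IsJCDecomp f fs fn)
    {μ : ℂ} {m : V} (hm : ∃ k : ℕ, ((f - μ • (1 : Module.End ℂ V)) ^ k) m = 0) :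
    fs m = μ • m := by
  obtain ⟨hsum, hc, hdiag, hnil⟩ := hJC
  obtain ⟨U, hUfd, hWU, hUinv⟩ := listInv [fs, fn]
    (by rintro g hg
        rcases List.mem_cons.mp hg with rfl | hg'
        · exact locFin_of_diag hdiag
        · simp only [List.mem_singleton] at hg'; subst hg'; exact locFin_of_locNilp hnil)
    (by intro a ha b hb
        simp only [List.mem_cons, List.mem_singleton, List.not_mem_nil, or_false] at ha hb
        rcases ha with rfl | rfl <;> rcases hb with rfl | rfl
        · exact Commute.refl _
        · exact hc
        · exact hc.symm
        · exact Commute.refl _)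
    (Submodule.span ℂ {m}) (FiniteDimensional.span_of_finite ℂ (Set.finite_singleton m))
  have hmU : m ∈ U := hWU (Submodule.subset_span rfl)
  have hfsU : ∀ x ∈ U, fs x ∈ U := hUinv fs (by simp)
  have hfnU : ∀ x ∈ U, fn x ∈ U := hUinv fn (by simp)
  have hfU : ∀ x ∈ U, f x ∈ U := by
    intro x hx
    rw [hsum, LinearMap.add_apply]
    exact U.add_mem (hfsU x hx) (hfnU x hx)
  set F := f.restrict hfU with hF
  set Fs := fs.restrict hfsU with hFs
  set Fn := fn.restrict hfnU with hFn
  have hFsum : F = Fs + Fn := by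
    ext x
    simp [hF, hFs, hFn, LinearMap.restrict_apply, hsum, LinearMap.add_apply]
  have hFn_nilp : IsNilpotent Fn := by
    obtain ⟨K, hK⟩ := exists_pow_kill hnil hUfd
    refine ⟨K, ?_⟩
    apply LinearMap.ext
    intro x
    rw [hFn, Module.End.pow_restrict]
    apply Subtype.ext
    simp only [LinearMap.restrict_coe_apply, LinearMap.zero_apply, ZeroMemClass.coe_zero]
    exact hK x x.2
  haveI := hUfd
  have hFs_diag : DiagEnd Fs := diag_restrict hdiag hfsU
  have hFs_fss : Module.End.IsFinitelySemisimple Fs :=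
    (diag_isSemisimple_of_findim hFs_diag).isFinitelySemisimple
  have hcomm' : Commute F Fs := by
    refine LinearMap.restrict_commute ?_ _ _
    have : Commute fs f := by rw [hsum]; exact (Commute.refl fs).add_right hc
    exact this.symm
  have hFnil : IsNilpotent (F - Fs) := by
    rw [hFsum, add_sub_cancel_left]
    exact hFn_nilp
  obtain ⟨k, hk⟩ := hm
  have hm' : (⟨m, hmU⟩ : U) ∈ Module.End.genEigenspace F μ ⊤ := by
    rw [Module.End.mem_genEigenspace_top]
    refine ⟨k, Subtype.ext ?_⟩
    rw [restrict_sub_pow_apply hfU μ k m hmU, hk]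
    rfl
  have := Module.End.apply_eq_of_mem_of_comm_of_isFinitelySemisimple_of_isNil hm' hcomm'
    hFs_fss hFnil
  have hcoe := congrArg Subtype.val this
  simpa [hFs, LinearMap.restrict_apply] using hcoe

end Aux3

section Aux4
variable {V : Type*} [AddCommGroup V] [Module ℂ V]
open Submodule Module Module.End

lemma locFin_of_JC {f fs fn : Module.End ℂ V} (hJC : IsJCDecomp f fs fn) : LocFinEnd f := by
  obtain ⟨hsum, hc, hdiag, hnil⟩ := hJC
  intro v
  obtain ⟨U, hUfd, hWU, hUinv⟩ := listInv [fs, fn]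
    (by rintro g hg
        simp only [List.mem_cons, List.mem_singleton, List.not_mem_nil, or_false] at hg
        rcases hg with rfl | rfl
        · exact locFin_of_diag hdiag
        · exact locFin_of_locNilp hnil)
    (by intro a ha b hb
        simp only [List.mem_cons, List.mem_singleton, List.not_mem_nil, or_false] at ha hb
        rcases ha with rfl | rfl <;> rcases hb with rfl | rfl
        · exact Commute.refl _
        · exact hc
        · exact hc.symm
        · exact Commute.refl _)
    (Submodule.span ℂ {v}) (FiniteDimensional.span_of_finite ℂ (Set.finite_singleton v))
  refine ⟨U, hUfd, hWU (Submodule.subset_span rfl), ?_⟩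
  intro x hx
  rw [hsum, LinearMap.add_apply]
  exact U.add_mem (hUinv fs (by simp) x hx) (hUinv fn (by simp) x hx)

/-- the parts of a JC decomposition commute with everything commuting with `f`. -/
lemma jc_parts_commute {f fs fn : Module.End ℂ V} (hJC : IsJCDecomp f fs fn)
    (g : Module.End ℂ V) (hg : Commute f g) : Commute fs g ∧ Commute fn g := by
  have hflf : LocFinEnd f := locFin_of_JC hJC
  have hs : Commute fs g := by
    have htop := iSup_maxGen_eq_top_of_locFin hflf
    have hle : (⨆ μ : ℂ, f.maxGenEigenspace μ) ≤ LinearMap.eqLocus (fs * g) (g * fs) := by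
      refine iSup_le fun μ => fun m hm => ?_
      have hgm : g m ∈ f.maxGenEigenspace μ :=
        Module.End.mapsTo_maxGenEigenspace_of_comm hg μ hm
      have h1 : fs (g m) = μ • (g m) :=
        jc_semisimple_part_apply hJC (Module.End.mem_maxGenEigenspace _ _ _ |>.mp hgm)
      have h2 : fs m = μ • m :=
        jc_semisimple_part_apply hJC (Module.End.mem_maxGenEigenspace _ _ _ |>.mp hm)
      show (fs * g) m = (g * fs) m
      rw [Module.End.mul_apply, Module.End.mul_apply, h1, h2, map_smul]
    rw [htop, top_le_iff] at hle
    exact LinearMap.eqLocus_eq_top.mp hle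
  have hn : Commute fn g := by
    have : fn = f - fs := by rw [hJC.1]; abel
    rw [this]
    exact hg.sub_left hs
  exact ⟨hs, hn⟩

end Aux4

section Aux5
variable {V : Type*} [AddCommGroup V] [Module ℂ V]
open Submodule Module Module.End
open scoped TensorProduct

/-- simultaneous eigenvectors of a commuting family of diagonalizable operators span. -/
lemma simdiag {L : ℕ} (c : Fin L → Module.End ℂ V) (hd : ∀ i, DiagEnd (c i))
    (hc : ∀ i j, Commute (c i) (c j)) :
    Submodule.span ℂ {x : V | ∃ χ : Fin L → ℂ, ∀ i, c i x = χ i • x} = ⊤ := by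
  rw [eq_top_iff']
  intro v
  obtain ⟨U, hUfd, hWU, hUinv⟩ := listInv (List.ofFn c)
    (fun f hf => by obtain ⟨i, rfl⟩ := List.mem_ofFn.mp hf; exact locFin_of_diag (hd i))
    (fun a ha b hb => by
      obtain ⟨i, rfl⟩ := List.mem_ofFn.mp ha
      obtain ⟨j, rfl⟩ := List.mem_ofFn.mp hb
      exact hc i j)
    (Submodule.span ℂ {v}) (FiniteDimensional.span_of_finite ℂ (Set.finite_singleton v))
  haveI := hUfd
  have hinv : ∀ i, ∀ x ∈ U, c i x ∈ U := fun i => hUinv (c i) (List.mem_ofFn.mpr ⟨i, rfl⟩)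
  set F : Fin L → Module.End ℂ U := fun i => (c i).restrict (hinv i) with hF
  have htop :=
    Module.End.iSup_iInf_maxGenEigenspace_eq_top_of_iSup_maxGenEigenspace_eq_top_of_commute F
      (fun i j _ => LinearMap.restrict_commute (hc i j) _ _)
      (fun i => Module.End.iSup_maxGenEigenspace_eq_top (F i))
  have hmem : (⟨v, hWU (Submodule.subset_span rfl)⟩ : U) ∈ (⊤ : Submodule ℂ U) := trivial
  rw [← htop] at hmem
  have hv' : v ∈ Submodule.map U.subtype
      (⨆ χ : Fin L → ℂ, ⨅ i, Module.End.maxGenEigenspace (F i) (χ i)) := ⟨_, hmem, rfl⟩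
  rw [Submodule.map_iSup] at hv'
  have hmono : (⨆ χ : Fin L → ℂ, Submodule.map U.subtype
        (⨅ i, Module.End.maxGenEigenspace (F i) (χ i)))
      ≤ Submodule.span ℂ {x : V | ∃ χ : Fin L → ℂ, ∀ i, c i x = χ i • x} := by
    refine iSup_le fun χ => ?_
    rintro x ⟨u, hu, rfl⟩
    refine Submodule.subset_span ⟨χ, fun i => ?_⟩
    have h1 : u ∈ Module.End.maxGenEigenspace (F i) (χ i) := (Submodule.mem_iInf _).mp hu i
    have h2 : (u : V) ∈ (c i).maxGenEigenspace (χ i) := maxGen_restrict_mem h1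
    exact jc_semisimple_part_apply
      ⟨(add_zero (c i)).symm, Commute.zero_right (c i), hd i, fun w => ⟨1, by simp⟩⟩
      ((Module.End.mem_maxGenEigenspace _ _ _).mp h2)
  exact hmono hv'

lemma tmul_mem_span2 {S1 S2 : Set V} {x y : V} (hx : x ∈ Submodule.span ℂ S1)
    (hy : y ∈ Submodule.span ℂ S2) :
    x ⊗ₜ[ℂ] y ∈ Submodule.span ℂ {t : V ⊗[ℂ] V | ∃ a ∈ S1, ∃ b ∈ S2, a ⊗ₜ[ℂ] b = t} := by
  induction hx using Submodule.span_induction with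
  | mem a ha =>
    induction hy using Submodule.span_induction with
    | mem b hb => exact Submodule.subset_span ⟨a, ha, b, hb, rfl⟩
    | zero => rw [TensorProduct.tmul_zero]; exact zero_mem _
    | add y1 y2 _ _ ih1 ih2 => rw [TensorProduct.tmul_add]; exact add_mem ih1 ih2
    | smul r y1 _ ih => rw [TensorProduct.tmul_smul]; exact Submodule.smul_mem _ _ ih
  | zero => rw [TensorProduct.zero_tmul]; exact zero_mem _
  | add x1 x2 _ _ ih1 ih2 => rw [TensorProduct.add_tmul]; exact add_mem ih1 ih2
  | smul r x1 _ ih => rw [← TensorProduct.smul_tmul']; exact Submodule.smul_mem _ _ ih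

lemma span_tmul_top {S1 S2 : Set V} (h1 : Submodule.span ℂ S1 = ⊤)
    (h2 : Submodule.span ℂ S2 = ⊤) :
    Submodule.span ℂ {t : V ⊗[ℂ] V | ∃ a ∈ S1, ∃ b ∈ S2, a ⊗ₜ[ℂ] b = t} = ⊤ := by
  rw [eq_top_iff, ← TensorProduct.span_tmul_eq_top ℂ V V]
  refine Submodule.span_le.mpr ?_
  rintro t ⟨m, n, rfl⟩
  exact tmul_mem_span2 (by rw [h1]; trivial) (by rw [h2]; trivial)

/-- the tensor subspace spanned by `W ⊗ U` -/
def tsp (W U : Submodule ℂ V) : Submodule ℂ (V ⊗[ℂ] V) :=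
  Submodule.span ℂ {t : V ⊗[ℂ] V | ∃ x ∈ W, ∃ y ∈ U, x ⊗ₜ[ℂ] y = t}

lemma tsp_inv {a b : Module.End ℂ V} {W U : Submodule ℂ V}
    (ha : ∀ x ∈ W, a x ∈ W) (hb : ∀ y ∈ U, b y ∈ U) :
    ∀ t ∈ tsp W U, TensorProduct.map a b t ∈ tsp W U := by
  refine spanInv (f := TensorProduct.map a b) ?_
  rintro t ⟨x, hx, y, hy, rfl⟩
  rw [TensorProduct.map_tmul]
  exact Submodule.subset_span ⟨a x, ha x hx, b y, hb y hy, rfl⟩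

lemma tsp_mem {W U : Submodule ℂ V} {x y : V} (hx : x ∈ W) (hy : y ∈ U) :
    x ⊗ₜ[ℂ] y ∈ tsp W U := Submodule.subset_span ⟨x, hx, y, hy, rfl⟩

lemma tsp_fd {W U : Submodule ℂ V} (hW : FiniteDimensional ℂ W) (hU : FiniteDimensional ℂ U) :
    FiniteDimensional ℂ (tsp W U) := by
  classical
  obtain ⟨s, hs⟩ := (Submodule.fg_iff_finiteDimensional W).mpr hW
  obtain ⟨u, hu⟩ := (Submodule.fg_iff_finiteDimensional U).mpr hU
  have hle : tsp W U ≤ Submodule.span ℂ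
      {t : V ⊗[ℂ] V | ∃ a ∈ (s : Set V), ∃ b ∈ (u : Set V), a ⊗ₜ[ℂ] b = t} := by
    refine Submodule.span_le.mpr ?_
    rintro t ⟨x, hx, y, hy, rfl⟩
    exact tmul_mem_span2 (by rw [hs]; exact hx) (by rw [hu]; exact hy)
  have hfin : {t : V ⊗[ℂ] V | ∃ a ∈ (s : Set V), ∃ b ∈ (u : Set V), a ⊗ₜ[ℂ] b = t}.Finite := by
    have : {t : V ⊗[ℂ] V | ∃ a ∈ (s : Set V), ∃ b ∈ (u : Set V), a ⊗ₜ[ℂ] b = t}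
        = Set.image2 (fun a b => a ⊗ₜ[ℂ] b) (s : Set V) (u : Set V) := by
      ext t
      simp [Set.mem_image2]
    rw [this]
    exact Set.Finite.image2 _ s.finite_toSet u.finite_toSet
  haveI := FiniteDimensional.span_of_finite ℂ hfin
  exact Submodule.finiteDimensional_of_le hle

lemma commute_tmap {a b c d : Module.End ℂ V}
    (h1 : Commute a c) (h2 : Commute b d) :
    Commute (TensorProduct.map a b) (TensorProduct.map c d) := by
  unfold Commute SemiconjBy
  rw [← TensorProduct.map_mul, ← TensorProduct.map_mul, h1.eq, h2.eq]

end Aux5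

section Aux6
variable {M : Type*} [AddCommGroup M] [Module ℂ M]
open Submodule

lemma restrict_add' {f g : Module.End ℂ M} {p : Submodule ℂ M}
    (hf : ∀ x ∈ p, f x ∈ p) (hg : ∀ x ∈ p, g x ∈ p)
    (hfg : ∀ x ∈ p, (f + g) x ∈ p) :
    (f + g).restrict hfg = f.restrict hf + g.restrict hg := by
  apply LinearMap.ext; intro x; apply Subtype.ext
  simp [LinearMap.restrict_coe_apply, LinearMap.add_apply]

lemma restrict_sum' {ι : Type*} (s : Finset ι) (f : ι → Module.End ℂ M) {p : Submodule ℂ M}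
    (hf : ∀ i, ∀ x ∈ p, f i x ∈ p) (hsum : ∀ x ∈ p, (∑ i ∈ s, f i) x ∈ p) :
    (∑ i ∈ s, f i).restrict hsum = ∑ i ∈ s, (f i).restrict (hf i) := by
  apply LinearMap.ext; intro x; apply Subtype.ext
  simp [LinearMap.restrict_coe_apply, LinearMap.sum_apply,
    AddSubmonoidClass.coe_finset_sum]

end Aux6

section Aux7
variable {V : Type*} [AddCommGroup V] [Module ℂ V]
open Submodule Module
open scoped TensorProduct

lemma tmap_restrict_nilpotent_right {a b : Module.End ℂ V} {W U : Submodule ℂ V}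
    (ha : ∀ x ∈ W, a x ∈ W) (hb : ∀ y ∈ U, b y ∈ U)
    {K : ℕ} (hK : ∀ y ∈ U, (b ^ K) y = 0) :
    IsNilpotent ((TensorProduct.map a b).restrict (tsp_inv ha hb)) := by
  refine ⟨K, ?_⟩
  apply LinearMap.ext; intro x; apply Subtype.ext
  rw [Module.End.pow_restrict, LinearMap.restrict_coe_apply, TensorProduct.map_pow]
  have hker : tsp W U ≤ LinearMap.ker (TensorProduct.map (a ^ K) (b ^ K)) := by
    refine Submodule.span_le.mpr ?_
    rintro t ⟨p, hp, q, hq, rfl⟩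
    rw [SetLike.mem_coe, LinearMap.mem_ker, TensorProduct.map_tmul, hK q hq,
      TensorProduct.tmul_zero]
  have := hker x.2
  rw [LinearMap.mem_ker] at this
  simpa using this

lemma tmap_restrict_nilpotent_left {a b : Module.End ℂ V} {W U : Submodule ℂ V}
    (ha : ∀ x ∈ W, a x ∈ W) (hb : ∀ y ∈ U, b y ∈ U)
    {K : ℕ} (hK : ∀ x ∈ W, (a ^ K) x = 0) :
    IsNilpotent ((TensorProduct.map a b).restrict (tsp_inv ha hb)) := by
  refine ⟨K, ?_⟩
  apply LinearMap.ext; intro x; apply Subtype.ext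
  rw [Module.End.pow_restrict, LinearMap.restrict_coe_apply, TensorProduct.map_pow]
  have hker : tsp W U ≤ LinearMap.ker (TensorProduct.map (a ^ K) (b ^ K)) := by
    refine Submodule.span_le.mpr ?_
    rintro t ⟨p, hp, q, hq, rfl⟩
    rw [SetLike.mem_coe, LinearMap.mem_ker, TensorProduct.map_tmul, hK p hp,
      TensorProduct.zero_tmul]
  have := hker x.2
  rw [LinearMap.mem_ker] at this
  simpa using this

end Aux7

open scoped TensorProduct

/-- Let `𝒮 = Σᵢ φᵢ ⊗ ψᵢ` on `V ⊗ V`, where the `φᵢ, ψⱼ` pairwise commute and are locally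
finite on `V`.  Then `𝒮` is locally finite on `V ⊗ V` and its Jordan–Chevalley decomposition is
`𝒮⁽ˢ⁾ = Σᵢ φᵢ⁽ˢ⁾ ⊗ ψᵢ⁽ˢ⁾` and
`𝒮⁽ⁿ⁾ = Σᵢ (φᵢ⁽ˢ⁾ ⊗ ψᵢ⁽ⁿ⁾ + φᵢ⁽ⁿ⁾ ⊗ ψᵢ⁽ˢ⁾ + φᵢ⁽ⁿ⁾ ⊗ ψᵢ⁽ⁿ⁾)`. -/
theorem braiding_jordan_chevalley {V : Type*} [AddCommGroup V] [Module ℂ V] (L : ℕ)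
    (φ ψ φs φn ψs ψn : Fin L → Module.End ℂ V)
    (hlf : ∀ i, LocFinEnd (φ i) ∧ LocFinEnd (ψ i))
    (hcomm : ∀ i j, Commute (φ i) (φ j) ∧ Commute (φ i) (ψ j) ∧ Commute (ψ i) (ψ j))
    (hJCφ : ∀ i, IsJCDecomp (φ i) (φs i) (φn i))
    (hJCψ : ∀ i, IsJCDecomp (ψ i) (ψs i) (ψn i)) :
    LocFinEnd (∑ i, TensorProduct.map (φ i) (ψ i) : Module.End ℂ (V ⊗[ℂ] V)) ∧
    IsJCDecomp (∑ i, TensorProduct.map (φ i) (ψ i))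
      (∑ i, TensorProduct.map (φs i) (ψs i))
      (∑ i, (TensorProduct.map (φs i) (ψn i) + TensorProduct.map (φn i) (ψs i) +
        TensorProduct.map (φn i) (ψn i))) := by
  classical
  have hφφ : ∀ i j, Commute (φ i) (φ j) := fun i j => (hcomm i j).1
  have hφψ : ∀ i j, Commute (φ i) (ψ j) := fun i j => (hcomm i j).2.1
  have hψψ : ∀ i j, Commute (ψ i) (ψ j) := fun i j => (hcomm i j).2.2
  have Aφ := fun i => jc_parts_commute (hJCφ i)
  have Aψ := fun i => jc_parts_commute (hJCψ i)
  have Cφsφ : ∀ i j, Commute (φs i) (φ j) := fun i j => (Aφ i _ (hφφ i j)).1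
  have Cφnφ : ∀ i j, Commute (φn i) (φ j) := fun i j => (Aφ i _ (hφφ i j)).2
  have Cφsψ : ∀ i j, Commute (φs i) (ψ j) := fun i j => (Aφ i _ (hφψ i j)).1
  have Cφnψ : ∀ i j, Commute (φn i) (ψ j) := fun i j => (Aφ i _ (hφψ i j)).2
  have Cψsψ : ∀ i j, Commute (ψs i) (ψ j) := fun i j => (Aψ i _ (hψψ i j)).1
  have Cψnψ : ∀ i j, Commute (ψn i) (ψ j) := fun i j => (Aψ i _ (hψψ i j)).2
  have Css : ∀ i j, Commute (φs i) (φs j) := fun i j => ((Aφ j _ (Cφsφ i j).symm).1).symm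
  have Csn : ∀ i j, Commute (φs i) (φn j) := fun i j => ((Aφ j _ (Cφsφ i j).symm).2).symm
  have Cns : ∀ i j, Commute (φn i) (φs j) := fun i j => ((Aφ j _ (Cφnφ i j).symm).1).symm
  have Cnn : ∀ i j, Commute (φn i) (φn j) := fun i j => ((Aφ j _ (Cφnφ i j).symm).2).symm
  have Dss : ∀ i j, Commute (ψs i) (ψs j) := fun i j => ((Aψ j _ (Cψsψ i j).symm).1).symm
  have Dsn : ∀ i j, Commute (ψs i) (ψn j) := fun i j => ((Aψ j _ (Cψsψ i j).symm).2).symm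
  have Dns : ∀ i j, Commute (ψn i) (ψs j) := fun i j => ((Aψ j _ (Cψnψ i j).symm).1).symm
  have Dnn : ∀ i j, Commute (ψn i) (ψn j) := fun i j => ((Aψ j _ (Cψnψ i j).symm).2).symm
  have Xss : ∀ i j, Commute (φs i) (ψs j) := fun i j => ((Aψ j _ (Cφsψ i j).symm).1).symm
  have Xsn : ∀ i j, Commute (φs i) (ψn j) := fun i j => ((Aψ j _ (Cφsψ i j).symm).2).symm
  have Xns : ∀ i j, Commute (φn i) (ψs j) := fun i j => ((Aψ j _ (Cφnψ i j).symm).1).symm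
  have Xnn : ∀ i j, Commute (φn i) (ψn j) := fun i j => ((Aψ j _ (Cφnψ i j).symm).2).symm
  refine ⟨?_, ?_, ?_, ?_, ?_⟩
  · -- local finiteness of 𝒮
    intro t
    obtain ⟨sf, hsf⟩ := TensorProduct.exists_finset t
    obtain ⟨W, hWfd, hWle, hWinv⟩ := listInv (List.ofFn φ)
      (fun f hf => by obtain ⟨i, rfl⟩ := List.mem_ofFn.mp hf; exact (hlf i).1)
      (fun a ha b hb => by
        obtain ⟨i, rfl⟩ := List.mem_ofFn.mp ha
        obtain ⟨j, rfl⟩ := List.mem_ofFn.mp hb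
        exact hφφ i j)
      (Submodule.span ℂ (sf.image Prod.fst : Finset V))
      (FiniteDimensional.span_of_finite ℂ (Finset.finite_toSet _))
    obtain ⟨U, hUfd, hUle, hUinv⟩ := listInv (List.ofFn ψ)
      (fun f hf => by obtain ⟨i, rfl⟩ := List.mem_ofFn.mp hf; exact (hlf i).2)
      (fun a ha b hb => by
        obtain ⟨i, rfl⟩ := List.mem_ofFn.mp ha
        obtain ⟨j, rfl⟩ := List.mem_ofFn.mp hb
        exact hψψ i j)
      (Submodule.span ℂ (sf.image Prod.snd : Finset V))
      (FiniteDimensional.span_of_finite ℂ (Finset.finite_toSet _))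
    refine ⟨tsp W U, tsp_fd hWfd hUfd, ?_, ?_⟩
    · rw [hsf]
      refine Submodule.sum_mem _ fun p hp => tsp_mem ?_ ?_
      · exact hWle (Submodule.subset_span (Finset.mem_coe.mpr (Finset.mem_image_of_mem _ hp)))
      · exact hUle (Submodule.subset_span (Finset.mem_coe.mpr (Finset.mem_image_of_mem _ hp)))
    · intro x hx
      rw [LinearMap.sum_apply]
      refine Submodule.sum_mem _ fun i _ => ?_
      exact tsp_inv (hWinv (φ i) (List.mem_ofFn.mpr ⟨i, rfl⟩))
        (hUinv (ψ i) (List.mem_ofFn.mpr ⟨i, rfl⟩)) x hx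
  · -- 𝒮 = 𝒮s + 𝒮n
    rw [← Finset.sum_add_distrib]
    refine Finset.sum_congr rfl fun i _ => ?_
    rw [(hJCφ i).1, (hJCψ i).1, TensorProduct.map_add_left, TensorProduct.map_add_right,
      TensorProduct.map_add_right]
    abel
  · -- Commute 𝒮s 𝒮n
    refine Commute.sum_left _ _ _ fun i _ => Commute.sum_right _ _ _ fun j _ => ?_
    exact ((commute_tmap (Css i j) (Dsn i j)).add_right
      (commute_tmap (Csn i j) (Dss i j))).add_right
      (commute_tmap (Csn i j) (Dsn i j))
  · -- DiagEnd 𝒮s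
    have h1 := simdiag φs (fun i => (hJCφ i).2.2.1) Css
    have h2 := simdiag ψs (fun i => (hJCψ i).2.2.1) Dss
    rw [DiagEnd, eq_top_iff, ← span_tmul_top h1 h2]
    refine Submodule.span_le.mpr ?_
    rintro t ⟨a, ⟨χ, hχ⟩, b, ⟨ξ, hξ⟩, rfl⟩
    refine Submodule.subset_span ⟨∑ i, χ i * ξ i, ?_⟩
    rw [LinearMap.sum_apply]
    calc (∑ i, (TensorProduct.map (φs i) (ψs i)) (a ⊗ₜ[ℂ] b))
        = ∑ i, (χ i * ξ i) • (a ⊗ₜ[ℂ] b) := by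
          refine Finset.sum_congr rfl fun i _ => ?_
          rw [TensorProduct.map_tmul, hχ i, hξ i, ← TensorProduct.smul_tmul',
            TensorProduct.tmul_smul, smul_smul]
      _ = (∑ i, χ i * ξ i) • (a ⊗ₜ[ℂ] b) := by rw [Finset.sum_smul]
  · -- LocNilpEnd 𝒮n
    intro t
    obtain ⟨sf, hsf⟩ := TensorProduct.exists_finset t
    obtain ⟨W, hWfd, hWle, hWinv⟩ := listInv (List.ofFn φs ++ List.ofFn φn)
      (by
        intro f hf
        rcases List.mem_append.mp hf with h1 | h1 <;>
          obtain ⟨i, rfl⟩ := List.mem_ofFn.mp h1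
        · exact locFin_of_diag (hJCφ i).2.2.1
        · exact locFin_of_locNilp (hJCφ i).2.2.2)
      (by
        intro a ha b hb
        rcases List.mem_append.mp ha with h1 | h1 <;>
          rcases List.mem_append.mp hb with h2 | h2 <;>
          obtain ⟨i, rfl⟩ := List.mem_ofFn.mp h1 <;>
          obtain ⟨j, rfl⟩ := List.mem_ofFn.mp h2
        · exact Css i j
        · exact Csn i j
        · exact Cns i j
        · exact Cnn i j)
      (Submodule.span ℂ (sf.image Prod.fst : Finset V))
      (FiniteDimensional.span_of_finite ℂ (Finset.finite_toSet _))
    obtain ⟨U, hUfd, hUle, hUinv⟩ := listInv (List.ofFn ψs ++ List.ofFn ψn)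
      (by
        intro f hf
        rcases List.mem_append.mp hf with h1 | h1 <;>
          obtain ⟨i, rfl⟩ := List.mem_ofFn.mp h1
        · exact locFin_of_diag (hJCψ i).2.2.1
        · exact locFin_of_locNilp (hJCψ i).2.2.2)
      (by
        intro a ha b hb
        rcases List.mem_append.mp ha with h1 | h1 <;>
          rcases List.mem_append.mp hb with h2 | h2 <;>
          obtain ⟨i, rfl⟩ := List.mem_ofFn.mp h1 <;>
          obtain ⟨j, rfl⟩ := List.mem_ofFn.mp h2
        · exact Dss i j
        · exact Dsn i j
        · exact Dns i j
        · exact Dnn i j)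
      (Submodule.span ℂ (sf.image Prod.snd : Finset V))
      (FiniteDimensional.span_of_finite ℂ (Finset.finite_toSet _))
    have hWφs : ∀ i, ∀ x ∈ W, φs i x ∈ W := fun i =>
      hWinv (φs i) (List.mem_append.mpr (Or.inl (List.mem_ofFn.mpr ⟨i, rfl⟩)))
    have hWφn : ∀ i, ∀ x ∈ W, φn i x ∈ W := fun i =>
      hWinv (φn i) (List.mem_append.mpr (Or.inr (List.mem_ofFn.mpr ⟨i, rfl⟩)))
    have hUψs : ∀ i, ∀ y ∈ U, ψs i y ∈ U := fun i =>
      hUinv (ψs i) (List.mem_append.mpr (Or.inl (List.mem_ofFn.mpr ⟨i, rfl⟩)))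
    have hUψn : ∀ i, ∀ y ∈ U, ψn i y ∈ U := fun i =>
      hUinv (ψn i) (List.mem_append.mpr (Or.inr (List.mem_ofFn.mpr ⟨i, rfl⟩)))
    have htT : t ∈ tsp W U := by
      rw [hsf]
      refine Submodule.sum_mem _ fun p hp => tsp_mem ?_ ?_
      · exact hWle (Submodule.subset_span (Finset.mem_coe.mpr (Finset.mem_image_of_mem _ hp)))
      · exact hUle (Submodule.subset_span (Finset.mem_coe.mpr (Finset.mem_image_of_mem _ hp)))
    set Mn : Fin L → Module.End ℂ (V ⊗[ℂ] V) := fun i =>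
      TensorProduct.map (φs i) (ψn i) + TensorProduct.map (φn i) (ψs i) +
        TensorProduct.map (φn i) (ψn i) with hMn
    have hMninv : ∀ i, ∀ x ∈ tsp W U, Mn i x ∈ tsp W U := by
      intro i x hx
      rw [hMn]
      simp only [LinearMap.add_apply]
      exact Submodule.add_mem _ (Submodule.add_mem _
        (tsp_inv (hWφs i) (hUψn i) x hx) (tsp_inv (hWφn i) (hUψs i) x hx))
        (tsp_inv (hWφn i) (hUψn i) x hx)
    have hSninv : ∀ x ∈ tsp W U, (∑ i, Mn i) x ∈ tsp W U := by
      intro x hx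
      rw [LinearMap.sum_apply]
      exact Submodule.sum_mem _ fun i _ => hMninv i x hx
    -- nilpotency of the restriction
    have hkillψ : ∀ i, ∃ K : ℕ, ∀ y ∈ U, ((ψn i) ^ K) y = 0 :=
      fun i => exists_pow_kill (hJCψ i).2.2.2 hUfd
    have hkillφ : ∀ i, ∃ K : ℕ, ∀ x ∈ W, ((φn i) ^ K) x = 0 :=
      fun i => exists_pow_kill (hJCφ i).2.2.2 hWfd
    have hMnil : ∀ i, IsNilpotent ((Mn i).restrict (hMninv i)) := by
      intro i
      have e : (Mn i).restrict (hMninv i) =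
          (TensorProduct.map (φs i) (ψn i)).restrict (tsp_inv (hWφs i) (hUψn i)) +
          (TensorProduct.map (φn i) (ψs i)).restrict (tsp_inv (hWφn i) (hUψs i)) +
          (TensorProduct.map (φn i) (ψn i)).restrict (tsp_inv (hWφn i) (hUψn i)) := by
        apply LinearMap.ext; intro x; apply Subtype.ext
        simp [hMn, LinearMap.restrict_coe_apply, LinearMap.add_apply]
      rw [e]
      obtain ⟨K1, hK1⟩ := hkillψ i
      obtain ⟨K2, hK2⟩ := hkillφ i
      have n1 := tmap_restrict_nilpotent_right (hWφs i) (hUψn i) hK1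
      have n2 := tmap_restrict_nilpotent_left (hWφn i) (hUψs i) hK2
      have n3 := tmap_restrict_nilpotent_right (hWφn i) (hUψn i) hK1
      have c12 : Commute
          ((TensorProduct.map (φs i) (ψn i)).restrict (tsp_inv (hWφs i) (hUψn i)))
          ((TensorProduct.map (φn i) (ψs i)).restrict (tsp_inv (hWφn i) (hUψs i))) :=
        LinearMap.restrict_commute (commute_tmap (Csn i i) (Dns i i)) _ _
      have c13 : Commute
          ((TensorProduct.map (φs i) (ψn i)).restrict (tsp_inv (hWφs i) (hUψn i)))
          ((TensorProduct.map (φn i) (ψn i)).restrict (tsp_inv (hWφn i) (hUψn i))) :=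
        LinearMap.restrict_commute (commute_tmap (Csn i i) (Dnn i i)) _ _
      have c23 : Commute
          ((TensorProduct.map (φn i) (ψs i)).restrict (tsp_inv (hWφn i) (hUψs i)))
          ((TensorProduct.map (φn i) (ψn i)).restrict (tsp_inv (hWφn i) (hUψn i))) :=
        LinearMap.restrict_commute (commute_tmap (Cnn i i) (Dsn i i)) _ _
      have h12 := Commute.isNilpotent_add c12 n1 n2
      exact Commute.isNilpotent_add (c13.add_left c23) h12 n3
    have hRnil : IsNilpotent ((∑ i, Mn i).restrict hSninv) := by
      rw [restrict_sum' Finset.univ Mn hMninv hSninv]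
      refine Commute.isNilpotent_sum (fun i _ => hMnil i) (fun i j _ _ => ?_)
      refine LinearMap.restrict_commute ?_ _ _
      simp only [hMn]
      have c_a : Commute (TensorProduct.map (φs i) (ψn i))
          (TensorProduct.map (φs j) (ψn j) + TensorProduct.map (φn j) (ψs j) +
            TensorProduct.map (φn j) (ψn j)) :=
        ((commute_tmap (Css i j) (Dnn i j)).add_right
          (commute_tmap (Csn i j) (Dns i j))).add_right (commute_tmap (Csn i j) (Dnn i j))
      have c_b : Commute (TensorProduct.map (φn i) (ψs i))
          (TensorProduct.map (φs j) (ψn j) + TensorProduct.map (φn j) (ψs j) +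
            TensorProduct.map (φn j) (ψn j)) :=
        ((commute_tmap (Cns i j) (Dsn i j)).add_right
          (commute_tmap (Cnn i j) (Dss i j))).add_right (commute_tmap (Cnn i j) (Dsn i j))
      have c_c : Commute (TensorProduct.map (φn i) (ψn i))
          (TensorProduct.map (φs j) (ψn j) + TensorProduct.map (φn j) (ψs j) +
            TensorProduct.map (φn j) (ψn j)) :=
        ((commute_tmap (Cns i j) (Dnn i j)).add_right
          (commute_tmap (Cnn i j) (Dns i j))).add_right (commute_tmap (Cnn i j) (Dnn i j))
      exact (c_a.add_left c_b).add_left c_c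
    obtain ⟨m, hm⟩ := hRnil
    refine ⟨m, ?_⟩
    have hval : ((∑ i, Mn i) ^ m) t
        = ((((∑ i, Mn i).restrict hSninv) ^ m) ⟨t, htT⟩ : V ⊗[ℂ] V) := by
      rw [Module.End.pow_restrict, LinearMap.restrict_coe_apply]
    rw [hval, hm]
    rfl
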